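/- Let H be the subgraph produced by the greedy spanner algorithm with parameter δ: process the edges of G in some order, adding edge (u,v) to H exactly when the current distance in H between u and v exceeds 2δ. Then H has girth at least 2δ+2 (in particular, at least 2δ+1). -/

import Mathlib

open scoped Classical in
/-- The greedy spanner: process the given edges in order, adding an edge `(u,v)` to `H`
exactly when the current distance in `H` between `u` and `v` exceeds `2δ`
(in particular when `u` and `v` are not yet connected). -/
noncomputable def greedySpanner {V : Type*} (δ : ℕ) : List (V × V) → SimpleGraph V
  | [] => ⊥
  | e :: l =>
    let H := greedySpanner δ l
    if ¬ H.Reachable e.1 e.2 ∨ 2 * δ < H.dist e.1 e.2 then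
      H ⊔ SimpleGraph.fromEdgeSet {s(e.1, e.2)}
    else H

open SimpleGraph in
/-- A cycle through the added edge `s(u,v)` yields a walk in `H` from `u` to `v`
that is strictly shorter than the cycle. -/
lemma cycle_split {V : Type*} {H : SimpleGraph V} {u v a : V}
    (w : (H ⊔ fromEdgeSet {s(u, v)}).Walk a a) (hw : w.IsCycle)
    (he : s(u, v) ∈ w.edges) :
    ∃ p : H.Walk u v, p.length + 1 ≤ w.length := by
  classical
  have hu : u ∈ w.support := w.fst_mem_support_of_mem_edges he
  set c : (H ⊔ fromEdgeSet {s(u, v)}).Walk u u := w.rotate u hu with hc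
  have hcyc : c.IsCycle := hw.rotate hu
  have hce : s(u, v) ∈ c.edges := by
    have := w.rotate_edges u hu
    exact this.mem_iff.mpr he
  have hclen : c.length = w.length := by
    have h1 := congrArg Walk.length (w.take_spec hu)
    rw [Walk.length_append] at h1
    have h2 : c.length = (w.dropUntil u hu).length + (w.takeUntil u hu).length := by
      rw [hc, Walk.rotate, Walk.length_append]
    omega
  have hv : v ∈ c.support := c.snd_mem_support_of_mem_edges hce
  set q1 := c.takeUntil v hv with hq1
  set q2 := c.dropUntil v hv with hq2
  have hspec := c.take_spec hv
  have hlen : q1.length + q2.length = c.length := by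
    have := congrArg Walk.length hspec
    rw [Walk.length_append, ← hq1, ← hq2] at this
    omega
  have hedges : c.edges = q1.edges ++ q2.edges := by
    rw [← Walk.edges_append, hspec]
  have hnodup : c.edges.Nodup := hcyc.edges_nodup
  rw [hedges] at hce hnodup
  have hkey : ∀ (p : (H ⊔ fromEdgeSet {s(u, v)}).Walk u v), s(u,v) ∉ p.edges →
      ∃ p' : H.Walk u v, p'.length = p.length := by
    intro p hp
    have hsub : ∀ e' ∈ p.edges, e' ∈ H.edgeSet := by
      intro e' he'
      have h1 : e' ∈ (H ⊔ fromEdgeSet {s(u, v)}).edgeSet := p.edges_subset_edgeSet he'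
      rw [edgeSet_sup, edgeSet_fromEdgeSet] at h1
      rcases h1 with h1 | h1
      · exact h1
      · have h2 : e' = s(u, v) := by simpa using h1.1
        exact absurd (h2 ▸ he') hp
    exact ⟨p.transfer H hsub, p.length_transfer hsub⟩
  rcases List.mem_append.mp hce with hin | hin
  · -- edge in q1; use q2.reverse
    have hnot : s(u, v) ∉ q2.edges := fun h =>
      (List.disjoint_of_nodup_append hnodup) hin h
    have hnot' : s(u, v) ∉ q2.reverse.edges := by
      rw [Walk.edges_reverse]; simpa using hnot
    obtain ⟨p', hp'⟩ := hkey q2.reverse hnot'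
    have h1 : 1 ≤ q1.length := by
      have hne : q1.edges ≠ [] := fun h => by simp [h] at hin
      have hl := q1.length_edges
      cases hq : q1.edges with
      | nil => exact absurd hq hne
      | cons x xs => rw [hq] at hl; simp at hl; omega
    refine ⟨p', ?_⟩
    rw [hp', Walk.length_reverse]
    omega
  · -- edge in q2; use q1
    have hnot : s(u, v) ∉ q1.edges := fun h =>
      (List.disjoint_of_nodup_append hnodup) h hin
    obtain ⟨p', hp'⟩ := hkey q1 hnot
    have h1 : 1 ≤ q2.length := by
      have hne : q2.edges ≠ [] := fun h => by simp [h] at hin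
      have hl := q2.length_edges
      cases hq : q2.edges with
      | nil => exact absurd hq hne
      | cons x xs => rw [hq] at hl; simp at hl; omega
    exact ⟨p', by omega⟩

/-- The graph `H` produced by the greedy spanner algorithm with parameter
`δ ≥ 1` has girth at least `2δ+2` (in particular at least `2δ+1`). -/
theorem greedySpanner_girth {V : Type*} [Fintype V] (δ : ℕ) (hδ : 1 ≤ δ)
    (l : List (V × V)) :
    (2 * δ + 2 : ℕ∞) ≤ (greedySpanner δ l).egirth := by
  classical
  open SimpleGraph in
  induction l with
  | nil => simp [greedySpanner]
  | cons e l ih =>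
    rw [greedySpanner]
    split_ifs with hc
    · rw [SimpleGraph.le_egirth]
      intro a w hw
      by_cases he : s(e.1, e.2) ∈ w.edges
      · obtain ⟨p, hp⟩ := cycle_split w hw he
        have hreach : (greedySpanner δ l).Reachable e.1 e.2 := ⟨p⟩
        have hdist : 2 * δ < (greedySpanner δ l).dist e.1 e.2 := by
          rcases hc with h | h
          · exact absurd hreach h
          · exact h
        have hdl : (greedySpanner δ l).dist e.1 e.2 ≤ p.length := SimpleGraph.dist_le p
        have hfin : 2 * δ + 2 ≤ w.length := by omega
        exact_mod_cast hfin
      · have hsub : ∀ e' ∈ w.edges, e' ∈ (greedySpanner δ l).edgeSet := by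
          intro e' he'
          have h1 : e' ∈ ((greedySpanner δ l) ⊔ SimpleGraph.fromEdgeSet {s(e.1, e.2)}).edgeSet :=
            w.edges_subset_edgeSet he'
          rw [SimpleGraph.edgeSet_sup, SimpleGraph.edgeSet_fromEdgeSet] at h1
          rcases h1 with h1 | h1
          · exact h1
          · have h2 : e' = s(e.1, e.2) := by simpa using h1.1
            exact absurd (h2 ▸ he') he
        have hc' := hw.transfer hsub
        have hle := SimpleGraph.le_egirth.mp ih a (w.transfer (greedySpanner δ l) hsub) hc'
        rwa [w.length_transfer hsub] at hle
    · exact ih
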